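/- There exists a constant c > 0 depending only on C, k and tau_2 such that for any two parameters gamma = (gamma_t, gamma_w) and gamma~ = (gamma~_t, gamma~_w) of the latent factor crowdsourcing model all of whose entries are bounded in absolute value by tau_2, the averaged Hellinger distance between the induced arrays of label distributions satisfies H_S(p(gamma), p(gamma~))^2 <= c * ((1/m) * ||gamma_t - gamma~_t||_F^2 + (1/n) * ||gamma_w - gamma~_w||_F^2), where ||.||_F is the Frobenius norm. -/

import Mathlib

open Finset

/-- The softmax map sending `θ ∈ ℝ^C` to a probability vector on `C` categories. -/
noncomputable def softmax {C : ℕ} (θ : Fin C → ℝ) (c : Fin C) : ℝ :=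
  Real.exp (θ c) / ∑ c', Real.exp (θ c')

/-- The squared Hellinger distance between two probability vectors on `C` categories. -/
noncomputable def hellingerSq {C : ℕ} (p q : Fin C → ℝ) : ℝ :=
  ∑ c, (Real.sqrt (p c) - Real.sqrt (q c)) ^ 2

/-- The label distribution of task `i` by worker `j` in the latent factor
crowdsourcing model with task factors `γt` and worker-category factors `γw`. -/
noncomputable def labelProb {m n C k : ℕ} (γt : Fin m → Fin k → ℝ)
    (γw : Fin n → Fin C → Fin k → ℝ) (i : Fin m) (j : Fin n) : Fin C → ℝ :=
  softmax (fun c => ∑ l, γt i l * γw j c l)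

/-- The averaged Hellinger distance between the arrays of label distributions
induced by two parameters of the latent factor crowdsourcing model. -/
noncomputable def HSparam {m n C k : ℕ} (γt : Fin m → Fin k → ℝ)
    (γw : Fin n → Fin C → Fin k → ℝ) (γt' : Fin m → Fin k → ℝ)
    (γw' : Fin n → Fin C → Fin k → ℝ) : ℝ :=
  Real.sqrt ((1 / (m * n : ℝ)) *
    ∑ i, ∑ j, hellingerSq (labelProb γt γw i j) (labelProb γt' γw' i j))

/-- there is a constant `c > 0`, depending only on `C`, `k` and `τ₂`,
such that for any two parameters with all entries bounded by `τ₂` in absolute value,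
the squared averaged Hellinger distance between the induced arrays of label
distributions is bounded by `c` times the scaled squared Frobenius distances of
the parameters. -/
lemma exp_sub_exp_le {x y M : ℝ} (hx : x ≤ M) (hy : y ≤ M) :
    |Real.exp x - Real.exp y| ≤ Real.exp M * |x - y| := by
  wlog h : y ≤ x generalizing x y
  · rw [abs_sub_comm, abs_sub_comm x y]; exact this hy hx (le_of_not_ge h)
  have h1 : Real.exp x * (1 + (y - x)) ≤ Real.exp y := by
    have h2 := Real.add_one_le_exp (y - x)
    have h3 : Real.exp x * (1 + (y - x)) ≤ Real.exp x * Real.exp (y - x) :=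
      mul_le_mul_of_nonneg_left (by linarith) (Real.exp_pos x).le
    calc Real.exp x * (1 + (y - x)) ≤ Real.exp x * Real.exp (y - x) := h3
    _ = Real.exp y := by rw [← Real.exp_add]; ring_nf
  rw [abs_of_nonneg (sub_nonneg.2 (Real.exp_le_exp.2 h)), abs_of_nonneg (sub_nonneg.2 h)]
  have hex : Real.exp x ≤ Real.exp M := Real.exp_le_exp.2 hx
  nlinarith [Real.exp_pos x, sub_nonneg.2 h]


lemma aux_hell {p q A : ℝ} (hp : 0 < p) (hq : 0 < q)
    (hp1 : 1 ≤ p * A) (hq1 : 1 ≤ q * A) :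
    4 * (Real.sqrt p - Real.sqrt q) ^ 2 ≤ (p - q) ^ 2 * A := by
  have hA : 0 < A := by nlinarith
  set u := Real.sqrt p with hu
  set v := Real.sqrt q with hv
  have hu2 : u ^ 2 = p := Real.sq_sqrt hp.le
  have hv2 : v ^ 2 = q := Real.sq_sqrt hq.le
  have hu0 : 0 ≤ u := Real.sqrt_nonneg _
  have hv0 : 0 ≤ v := Real.sqrt_nonneg _
  have h1 : 1 ≤ u ^ 2 * A := by rw [hu2]; exact hp1
  have h2 : 1 ≤ v ^ 2 * A := by rw [hv2]; exact hq1
  have huv : 1 ≤ u * v * A := by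
    have h12 : 1 ≤ (u ^ 2 * A) * (v ^ 2 * A) := by nlinarith
    nlinarith [mul_nonneg (mul_nonneg hu0 hv0) hA.le]
  have h4 : 4 ≤ (u + v) ^ 2 * A := by nlinarith
  have h5 : 0 ≤ (u - v) ^ 2 * ((u + v) ^ 2 * A - 4) :=
    mul_nonneg (sq_nonneg _) (by linarith)
  have heq : (p - q) ^ 2 = (u - v) ^ 2 * (u + v) ^ 2 := by
    rw [← hu2, ← hv2]; ring
  nlinarith [heq]

set_option maxHeartbeats 1600000 in
lemma hellingerSq_softmax_le {C : ℕ} {M : ℝ} (hM : 0 ≤ M) (θ θ' : Fin C → ℝ)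
    (hθ : ∀ c, |θ c| ≤ M) (hθ' : ∀ c, |θ' c| ≤ M) :
    hellingerSq (softmax θ) (softmax θ') ≤
      ((C : ℝ) + 1) ^ 2 * Real.exp M ^ 10 * ∑ c, (θ c - θ' c) ^ 2 := by
  rcases Nat.eq_zero_or_pos C with hC | hCpos
  · subst hC
    simp [hellingerSq]
  -- setup
  set E := Real.exp M with hEdef
  have hE1 : 1 ≤ E := Real.one_le_exp hM
  have hEpos : 0 < E := lt_of_lt_of_le one_pos hE1
  set Cr : ℝ := (C : ℝ) with hCr
  have hCr1 : (1:ℝ) ≤ Cr := by rw [hCr]; exact_mod_cast Nat.one_le_iff_ne_zero.2 (Nat.pos_iff_ne_zero.1 hCpos)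
  have hne : (univ : Finset (Fin C)).Nonempty := ⟨⟨0, hCpos⟩, mem_univ _⟩
  set S := ∑ c', Real.exp (θ c') with hSdef
  set T := ∑ c', Real.exp (θ' c') with hTdef
  set s := ∑ c', |θ c' - θ' c'| with hsdef
  have hs0 : 0 ≤ s := Finset.sum_nonneg fun _ _ => abs_nonneg _
  have hQ0 : (0:ℝ) ≤ ∑ c, (θ c - θ' c) ^ 2 := Finset.sum_nonneg fun _ _ => sq_nonneg _
  have hCS : s ^ 2 ≤ Cr * ∑ c, (θ c - θ' c) ^ 2 := by
    have := sq_sum_le_card_mul_sum_sq (s := (univ : Finset (Fin C)))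
      (f := fun c => |θ c - θ' c|)
    simpa [hsdef, sq_abs, card_univ] using this
  have hSpos : 0 < S := Finset.sum_pos (fun c _ => Real.exp_pos _) hne
  have hTpos : 0 < T := Finset.sum_pos (fun c _ => Real.exp_pos _) hne
  -- upper/lower bounds for S, T
  have hupper : ∀ (η : Fin C → ℝ), (∀ c, |η c| ≤ M) →
      (∑ c', Real.exp (η c')) ≤ Cr * E := by
    intro η hη
    calc (∑ c', Real.exp (η c')) ≤ ∑ _c' : Fin C, E := by
          refine Finset.sum_le_sum fun c _ => ?_
          exact Real.exp_le_exp.2 (abs_le.1 (hη c)).2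
      _ = Cr * E := by simp [mul_comm, hCr]
  have hlower : ∀ (η : Fin C → ℝ), (∀ c, |η c| ≤ M) →
      Cr ≤ (∑ c', Real.exp (η c')) * E := by
    intro η hη
    have : ∀ c : Fin C, (1:ℝ) ≤ Real.exp (η c) * E := by
      intro c
      rw [hEdef, ← Real.exp_add]
      exact Real.one_le_exp (by have := (abs_le.1 (hη c)).1; linarith)
    calc Cr = ∑ _c : Fin C, (1:ℝ) := by simp [hCr]
      _ ≤ ∑ c, Real.exp (η c) * E := Finset.sum_le_sum fun c _ => this c
      _ = (∑ c', Real.exp (η c')) * E := by rw [Finset.sum_mul]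
  have hSu : S ≤ Cr * E := hupper θ hθ
  have hTu : T ≤ Cr * E := hupper θ' hθ'
  have hSl : Cr ≤ S * E := hlower θ hθ
  have hTl : Cr ≤ T * E := hlower θ' hθ'
  have hTSdiff : |T - S| ≤ E * s := by
    have : T - S = ∑ c', (Real.exp (θ' c') - Real.exp (θ c')) := by
      rw [hTdef, hSdef, ← Finset.sum_sub_distrib]
    rw [this]
    calc |∑ c', (Real.exp (θ' c') - Real.exp (θ c'))|
        ≤ ∑ c', |Real.exp (θ' c') - Real.exp (θ c')| := Finset.abs_sum_le_sum_abs _ _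
      _ ≤ ∑ c', E * |θ c' - θ' c'| := by
          refine Finset.sum_le_sum fun c _ => ?_
          rw [abs_sub_comm (θ c)]
          exact exp_sub_exp_le (abs_le.1 (hθ' c)).2 (abs_le.1 (hθ c)).2
      _ = E * s := by rw [hsdef, Finset.mul_sum]
  -- per-entry bound
  have key : ∀ c : Fin C,
      (Real.sqrt (softmax θ c) - Real.sqrt (softmax θ' c)) ^ 2 * (4 * Cr ^ 4) ≤
        Cr * (Cr + 1) ^ 2 * E ^ 10 * s ^ 2 := by
    intro c
    set x := θ c with hx
    set y := θ' c with hy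
    set p := softmax θ c with hp
    set q := softmax θ' c with hq
    have hpdef : p = Real.exp x / S := rfl
    have hqdef : q = Real.exp y / T := rfl
    have hppos : 0 < p := by rw [hpdef]; positivity
    have hqpos : 0 < q := by rw [hqdef]; positivity
    -- lower bound on p, q
    have hplow : ∀ (z : ℝ) (U : ℝ), 0 < U → U ≤ Cr * E → -M ≤ z →
        (1:ℝ) ≤ Real.exp z / U * (Cr * E ^ 2) := by
      intro z U hU hUu hz
      have h1 : (1:ℝ) ≤ Real.exp z * E := by
        rw [hEdef, ← Real.exp_add]
        exact Real.one_le_exp (by linarith)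
      have h2 : U ≤ Real.exp z * (Cr * E ^ 2) := by
        have : Cr * E ≤ (Real.exp z * E) * (Cr * E) := by
          nlinarith [Real.exp_pos z]
        nlinarith
      rw [div_mul_eq_mul_div, le_div_iff₀ hU, one_mul]
      exact h2
    have hp1 : (1:ℝ) ≤ p * (Cr * E ^ 2) := by
      rw [hpdef]; exact hplow x S hSpos hSu (abs_le.1 (hθ c)).1
    have hq1 : (1:ℝ) ≤ q * (Cr * E ^ 2) := by
      rw [hqdef]; exact hplow y T hTpos hTu (abs_le.1 (hθ' c)).1
    -- numerator bound
    have hnum : |p - q| * (S * T) ≤ (Cr + 1) * E ^ 2 * s := by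
      have hpq : p - q = (Real.exp x * T - S * Real.exp y) / (S * T) := by
        rw [hpdef, hqdef]; rw [div_sub_div _ _ (ne_of_gt hSpos) (ne_of_gt hTpos)]
      have hST : 0 < S * T := mul_pos hSpos hTpos
      rw [hpq, abs_div, abs_of_pos hST, div_mul_cancel₀ _ (ne_of_gt hST)]
      have hsplit : Real.exp x * T - S * Real.exp y =
          (Real.exp x - Real.exp y) * T + Real.exp y * (T - S) := by ring
      have hxy : |x - y| ≤ s := by
        rw [hsdef]
        exact Finset.single_le_sum (f := fun c' => |θ c' - θ' c'|)
          (fun c' _ => abs_nonneg _) (mem_univ c)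
      have h1 : |Real.exp x - Real.exp y| ≤ E * s := by
        calc |Real.exp x - Real.exp y| ≤ E * |x - y| :=
            exp_sub_exp_le (abs_le.1 (hθ c)).2 (abs_le.1 (hθ' c)).2
          _ ≤ E * s := mul_le_mul_of_nonneg_left hxy hEpos.le
      have h2 : Real.exp y ≤ E := Real.exp_le_exp.2 (abs_le.1 (hθ' c)).2
      calc |Real.exp x * T - S * Real.exp y|
          ≤ |Real.exp x - Real.exp y| * T + Real.exp y * |T - S| := by
            rw [hsplit]
            refine (abs_add_le _ _).trans ?_
            rw [abs_mul, abs_mul, abs_of_pos hTpos, abs_of_pos (Real.exp_pos y)]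
        _ ≤ (E * s) * (Cr * E) + E * (E * s) := by
            have := mul_le_mul h1 hTu hTpos.le (by positivity)
            have h3 : Real.exp y * |T - S| ≤ E * (E * s) :=
              mul_le_mul h2 hTSdiff (abs_nonneg _) hEpos.le
            linarith
        _ = (Cr + 1) * E ^ 2 * s := by ring
    -- Cr^2 * |p - q| ≤ (Cr+1) * E^4 * s
    have hpqb : Cr ^ 2 * |p - q| ≤ (Cr + 1) * E ^ 4 * s := by
      have hST2 : Cr ^ 2 ≤ (S * T) * E ^ 2 := by
        calc Cr ^ 2 = Cr * Cr := sq Cr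
          _ ≤ (S * E) * (T * E) :=
            mul_le_mul hSl hTl (by linarith) (by positivity)
          _ = (S * T) * E ^ 2 := by ring
      have habs : 0 ≤ |p - q| := abs_nonneg _
      have h1 : Cr ^ 2 * |p - q| ≤ (S * T) * E ^ 2 * |p - q| :=
        mul_le_mul_of_nonneg_right hST2 habs
      have h2 : (S * T) * E ^ 2 * |p - q| = E ^ 2 * (|p - q| * (S * T)) := by ring
      have h3 : E ^ 2 * (|p - q| * (S * T)) ≤ E ^ 2 * ((Cr + 1) * E ^ 2 * s) :=
        mul_le_mul_of_nonneg_left hnum (by positivity)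
      calc Cr ^ 2 * |p - q| ≤ E ^ 2 * (|p - q| * (S * T)) := by linarith
        _ ≤ E ^ 2 * ((Cr + 1) * E ^ 2 * s) := h3
        _ = (Cr + 1) * E ^ 4 * s := by ring
    -- squared version
    have hpqsq : Cr ^ 4 * (p - q) ^ 2 ≤ (Cr + 1) ^ 2 * E ^ 8 * s ^ 2 := by
      have h := mul_le_mul hpqb hpqb (by positivity) (by positivity)
      have habs : |p - q| * |p - q| = (p - q) ^ 2 := by rw [← sq, sq_abs]
      calc Cr ^ 4 * (p - q) ^ 2 = (Cr ^ 2 * |p - q|) * (Cr ^ 2 * |p - q|) := by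
            rw [← habs]; ring
        _ ≤ ((Cr + 1) * E ^ 4 * s) * ((Cr + 1) * E ^ 4 * s) := h
        _ = (Cr + 1) ^ 2 * E ^ 8 * s ^ 2 := by ring
    -- Hellinger per entry:  4 * (√p-√q)^2 ≤ (p-q)^2 * (Cr*E^2)
    have hhell : 4 * (Real.sqrt p - Real.sqrt q) ^ 2 ≤ (p - q) ^ 2 * (Cr * E ^ 2) :=
      aux_hell hppos hqpos hp1 hq1
    -- combine
    have hCr0 : (0:ℝ) < Cr := lt_of_lt_of_le one_pos hCr1
    calc (Real.sqrt p - Real.sqrt q) ^ 2 * (4 * Cr ^ 4)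
        = (4 * (Real.sqrt p - Real.sqrt q) ^ 2) * Cr ^ 4 := by ring
      _ ≤ ((p - q) ^ 2 * (Cr * E ^ 2)) * Cr ^ 4 :=
          mul_le_mul_of_nonneg_right hhell (by positivity)
      _ = (Cr ^ 4 * (p - q) ^ 2) * (Cr * E ^ 2) := by ring
      _ ≤ ((Cr + 1) ^ 2 * E ^ 8 * s ^ 2) * (Cr * E ^ 2) :=
          mul_le_mul_of_nonneg_right hpqsq (by positivity)
      _ = Cr * (Cr + 1) ^ 2 * E ^ 10 * s ^ 2 := by ring
  -- sum up
  have hCr0 : (0:ℝ) < Cr := lt_of_lt_of_le one_pos hCr1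
  set Q := ∑ c, (θ c - θ' c) ^ 2 with hQdef
  have hsum : hellingerSq (softmax θ) (softmax θ') * (4 * Cr ^ 4) ≤
      Cr * (Cr * (Cr + 1) ^ 2 * E ^ 10 * s ^ 2) := by
    rw [hellingerSq, Finset.sum_mul]
    calc (∑ c, (Real.sqrt (softmax θ c) - Real.sqrt (softmax θ' c)) ^ 2 * (4 * Cr ^ 4))
        ≤ ∑ _c : Fin C, Cr * (Cr + 1) ^ 2 * E ^ 10 * s ^ 2 :=
          Finset.sum_le_sum fun c _ => key c
      _ = Cr * (Cr * (Cr + 1) ^ 2 * E ^ 10 * s ^ 2) := by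
          rw [Finset.sum_const, card_univ, Fintype.card_fin, nsmul_eq_mul]
  have h2 : Cr * (Cr * (Cr + 1) ^ 2 * E ^ 10 * s ^ 2) ≤
      Cr ^ 2 * (Cr + 1) ^ 2 * E ^ 10 * (Cr * Q) := by
    calc Cr * (Cr * (Cr + 1) ^ 2 * E ^ 10 * s ^ 2)
        = Cr ^ 2 * (Cr + 1) ^ 2 * E ^ 10 * s ^ 2 := by ring
      _ ≤ Cr ^ 2 * (Cr + 1) ^ 2 * E ^ 10 * (Cr * Q) :=
        mul_le_mul_of_nonneg_left hCS (by positivity)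
  have h3 : Cr ^ 2 * (Cr + 1) ^ 2 * E ^ 10 * (Cr * Q) ≤
      ((Cr + 1) ^ 2 * E ^ 10 * Q) * (4 * Cr ^ 4) := by
    have hCr3 : Cr ^ 3 ≤ 4 * Cr ^ 4 := by
      calc Cr ^ 3 = Cr ^ 3 * 1 := (mul_one _).symm
        _ ≤ Cr ^ 3 * (4 * Cr) :=
          mul_le_mul_of_nonneg_left (by linarith) (by positivity)
        _ = 4 * Cr ^ 4 := by ring
    calc Cr ^ 2 * (Cr + 1) ^ 2 * E ^ 10 * (Cr * Q)
        = Cr ^ 3 * ((Cr + 1) ^ 2 * E ^ 10 * Q) := by ring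
      _ ≤ (4 * Cr ^ 4) * ((Cr + 1) ^ 2 * E ^ 10 * Q) :=
        mul_le_mul_of_nonneg_right hCr3 (by positivity)
      _ = ((Cr + 1) ^ 2 * E ^ 10 * Q) * (4 * Cr ^ 4) := by ring
  have h4 : (0:ℝ) < 4 * Cr ^ 4 := by positivity
  exact le_of_mul_le_mul_right (by linarith) h4

lemma sq_add_le {x y : ℝ} : (x + y) ^ 2 ≤ 2 * x ^ 2 + 2 * y ^ 2 := by
  nlinarith [sq_nonneg (x - y)]

lemma theta_sq_bound {C k : ℕ} {τ₂ : ℝ} (hτ₂ : 0 ≤ τ₂) (a a' : Fin k → ℝ)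
    (b b' : Fin C → Fin k → ℝ)
    (ha : ∀ l, |a l| ≤ τ₂) (hb : ∀ c l, |b c l| ≤ τ₂)
    (ha' : ∀ l, |a' l| ≤ τ₂) (hb' : ∀ c l, |b' c l| ≤ τ₂) :
    ∑ c, ((∑ l, a l * b c l) - ∑ l, a' l * b' c l) ^ 2 ≤
      2 * (k : ℝ) * τ₂ ^ 2 *
        ((C : ℝ) * (∑ l, (a l - a' l) ^ 2) + ∑ c, ∑ l, (b c l - b' c l) ^ 2) := by
  have key : ∀ c : Fin C, ((∑ l, a l * b c l) - ∑ l, a' l * b' c l) ^ 2 ≤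
      2 * (k : ℝ) * τ₂ ^ 2 *
        ((∑ l, (a l - a' l) ^ 2) + ∑ l, (b c l - b' c l) ^ 2) := by
    intro c
    set t := ∑ l, (|a l - a' l| + |b c l - b' c l|) with ht
    have ht0 : 0 ≤ t := Finset.sum_nonneg fun l _ => by positivity
    have habs : |(∑ l, a l * b c l) - ∑ l, a' l * b' c l| ≤ τ₂ * t := by
      rw [← Finset.sum_sub_distrib]
      calc |∑ l, (a l * b c l - a' l * b' c l)|
          ≤ ∑ l, |a l * b c l - a' l * b' c l| := Finset.abs_sum_le_sum_abs _ _
        _ ≤ ∑ l, τ₂ * (|a l - a' l| + |b c l - b' c l|) := by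
            refine Finset.sum_le_sum fun l _ => ?_
            have h1 : a l * b c l - a' l * b' c l =
                (a l - a' l) * b c l + a' l * (b c l - b' c l) := by ring
            rw [h1]
            calc |(a l - a' l) * b c l + a' l * (b c l - b' c l)|
                ≤ |(a l - a' l) * b c l| + |a' l * (b c l - b' c l)| := abs_add_le _ _
              _ = |a l - a' l| * |b c l| + |a' l| * |b c l - b' c l| := by
                  rw [abs_mul, abs_mul]
              _ ≤ |a l - a' l| * τ₂ + τ₂ * |b c l - b' c l| := by
                  have := mul_le_mul_of_nonneg_left (hb c l) (abs_nonneg (a l - a' l))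
                  have := mul_le_mul_of_nonneg_right (ha' l) (abs_nonneg (b c l - b' c l))
                  linarith
              _ = τ₂ * (|a l - a' l| + |b c l - b' c l|) := by ring
        _ = τ₂ * t := by rw [ht, Finset.mul_sum]
    have hsq : ((∑ l, a l * b c l) - ∑ l, a' l * b' c l) ^ 2 ≤ (τ₂ * t) ^ 2 := by
      rw [← sq_abs]
      exact pow_le_pow_left₀ (abs_nonneg _) habs 2
    have ht2 : t ^ 2 ≤ (k : ℝ) * ∑ l, (|a l - a' l| + |b c l - b' c l|) ^ 2 := by
      have := sq_sum_le_card_mul_sum_sq (s := (univ : Finset (Fin k)))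
        (f := fun l => |a l - a' l| + |b c l - b' c l|)
      simpa [ht, card_univ] using this
    have ht3 : (∑ l, (|a l - a' l| + |b c l - b' c l|) ^ 2) ≤
        ∑ l, (2 * (a l - a' l) ^ 2 + 2 * (b c l - b' c l) ^ 2) := by
      refine Finset.sum_le_sum fun l _ => ?_
      calc (|a l - a' l| + |b c l - b' c l|) ^ 2
          ≤ 2 * |a l - a' l| ^ 2 + 2 * |b c l - b' c l| ^ 2 := sq_add_le
        _ = 2 * (a l - a' l) ^ 2 + 2 * (b c l - b' c l) ^ 2 := by
            rw [sq_abs, sq_abs]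
    have hsum2 : (∑ l, (2 * (a l - a' l) ^ 2 + 2 * (b c l - b' c l) ^ 2)) =
        2 * ((∑ l, (a l - a' l) ^ 2) + ∑ l, (b c l - b' c l) ^ 2) := by
      rw [Finset.sum_add_distrib, ← Finset.mul_sum, ← Finset.mul_sum]; ring
    have hk0 : (0 : ℝ) ≤ (k : ℝ) := Nat.cast_nonneg k
    calc ((∑ l, a l * b c l) - ∑ l, a' l * b' c l) ^ 2 ≤ (τ₂ * t) ^ 2 := hsq
      _ = τ₂ ^ 2 * t ^ 2 := by ring
      _ ≤ τ₂ ^ 2 * ((k : ℝ) * ∑ l, (|a l - a' l| + |b c l - b' c l|) ^ 2) :=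
          mul_le_mul_of_nonneg_left ht2 (by positivity)
      _ ≤ τ₂ ^ 2 * ((k : ℝ) * ∑ l, (2 * (a l - a' l) ^ 2 + 2 * (b c l - b' c l) ^ 2)) := by
          refine mul_le_mul_of_nonneg_left (mul_le_mul_of_nonneg_left ht3 hk0) (by positivity)
      _ = 2 * (k : ℝ) * τ₂ ^ 2 *
            ((∑ l, (a l - a' l) ^ 2) + ∑ l, (b c l - b' c l) ^ 2) := by
          rw [hsum2]; ring
  calc (∑ c, ((∑ l, a l * b c l) - ∑ l, a' l * b' c l) ^ 2)
      ≤ ∑ c, 2 * (k : ℝ) * τ₂ ^ 2 *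
          ((∑ l, (a l - a' l) ^ 2) + ∑ l, (b c l - b' c l) ^ 2) :=
        Finset.sum_le_sum fun c _ => key c
    _ = 2 * (k : ℝ) * τ₂ ^ 2 *
          ((C : ℝ) * (∑ l, (a l - a' l) ^ 2) + ∑ c, ∑ l, (b c l - b' c l) ^ 2) := by
        rw [← Finset.mul_sum, Finset.sum_add_distrib, Finset.sum_const, card_univ,
          Fintype.card_fin, nsmul_eq_mul]

lemma avg_split {m n : ℕ} (hm : 0 < m) (hn : 0 < n) (κ : ℝ)
    (A : Fin m → ℝ) (B : Fin n → ℝ) :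
    (1 / (m * n : ℝ)) * ∑ i, ∑ j, κ * (A i + B j) =
      κ * ((1 / (m : ℝ)) * ∑ i, A i + (1 / (n : ℝ)) * ∑ j, B j) := by
  have hm' : (m : ℝ) ≠ 0 := Nat.cast_ne_zero.2 hm.ne'
  have hn' : (n : ℝ) ≠ 0 := Nat.cast_ne_zero.2 hn.ne'
  have h1 : (∑ i, ∑ j, κ * (A i + B j)) =
      κ * ((n : ℝ) * ∑ i, A i + (m : ℝ) * ∑ j, B j) := by
    simp only [mul_add, Finset.sum_add_distrib, ← Finset.mul_sum, Finset.sum_const,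
      card_univ, Fintype.card_fin, nsmul_eq_mul]
  rw [h1]; field_simp

theorem HS_le_frobenius (C k : ℕ) (τ₂ : ℝ) (hτ₂ : 0 ≤ τ₂) :
    ∃ c : ℝ, 0 < c ∧
      ∀ (m n : ℕ), 0 < m → 0 < n →
      ∀ (γt γt' : Fin m → Fin k → ℝ) (γw γw' : Fin n → Fin C → Fin k → ℝ),
        (∀ i l, |γt i l| ≤ τ₂) → (∀ j c' l, |γw j c' l| ≤ τ₂) →
        (∀ i l, |γt' i l| ≤ τ₂) → (∀ j c' l, |γw' j c' l| ≤ τ₂) →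
        (HSparam γt γw γt' γw') ^ 2 ≤
          c * ((1 / (m : ℝ)) * (∑ i, ∑ l, (γt i l - γt' i l) ^ 2) +
               (1 / (n : ℝ)) * (∑ j, ∑ c', ∑ l, (γw j c' l - γw' j c' l) ^ 2)) := by
  set M : ℝ := (k : ℝ) * τ₂ ^ 2 with hMdef
  have hM : 0 ≤ M := by positivity
  set K : ℝ := ((C : ℝ) + 1) ^ 2 * Real.exp M ^ 10 with hKdef
  set c₀ : ℝ := K * (2 * (k : ℝ) * τ₂ ^ 2 * ((C : ℝ) + 1)) with hc₀
  have hc₀0 : 0 ≤ c₀ := by positivity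
  refine ⟨c₀ + 1, by positivity, ?_⟩
  intro m n hm hn γt γt' γw γw' hγt hγw hγt' hγw'
  have hbound : ∀ (i : Fin m) (j : Fin n),
      hellingerSq (labelProb γt γw i j) (labelProb γt' γw' i j) ≤
        (c₀ + 1) * ((∑ l, (γt i l - γt' i l) ^ 2) +
          ∑ c', ∑ l, (γw j c' l - γw' j c' l) ^ 2) := by
    intro i j
    have hθb : ∀ (a : Fin k → ℝ) (b : Fin C → Fin k → ℝ), (∀ l, |a l| ≤ τ₂) →
        (∀ c l, |b c l| ≤ τ₂) → ∀ c, |∑ l, a l * b c l| ≤ M := by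
      intro a b ha hb c
      calc |∑ l, a l * b c l| ≤ ∑ l, |a l * b c l| := Finset.abs_sum_le_sum_abs _ _
        _ ≤ ∑ _l : Fin k, τ₂ * τ₂ := Finset.sum_le_sum fun l _ => by
            rw [abs_mul]; exact mul_le_mul (ha l) (hb c l) (abs_nonneg _) hτ₂
        _ = M := by
            rw [Finset.sum_const, card_univ, Fintype.card_fin, nsmul_eq_mul, hMdef]; ring
    have h1 := hellingerSq_softmax_le hM (fun c => ∑ l, γt i l * γw j c l)
      (fun c => ∑ l, γt' i l * γw' j c l)
      (hθb (γt i) (γw j) (hγt i) (fun c l => hγw j c l))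
      (hθb (γt' i) (γw' j) (hγt' i) (fun c l => hγw' j c l))
    have h2 := theta_sq_bound (C := C) (k := k) hτ₂ (γt i) (γt' i) (γw j) (γw' j)
      (hγt i) (fun c l => hγw j c l) (hγt' i) (fun c l => hγw' j c l)
    set A := ∑ l, (γt i l - γt' i l) ^ 2 with hA
    set B := ∑ c', ∑ l, (γw j c' l - γw' j c' l) ^ 2 with hB
    have hA0 : 0 ≤ A := Finset.sum_nonneg fun _ _ => sq_nonneg _
    have hB0 : 0 ≤ B := Finset.sum_nonneg fun _ _ =>
      Finset.sum_nonneg fun _ _ => sq_nonneg _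
    have hK0 : (0:ℝ) ≤ K := by positivity
    have hstep : (C : ℝ) * A + B ≤ ((C : ℝ) + 1) * (A + B) := by
      have h3 : (0:ℝ) ≤ (C : ℝ) * B := mul_nonneg (Nat.cast_nonneg C) hB0
      nlinarith
    calc hellingerSq (labelProb γt γw i j) (labelProb γt' γw' i j)
        ≤ K * ∑ c, ((∑ l, γt i l * γw j c l) - ∑ l, γt' i l * γw' j c l) ^ 2 := h1
      _ ≤ K * (2 * (k : ℝ) * τ₂ ^ 2 * ((C : ℝ) * A + B)) :=
          mul_le_mul_of_nonneg_left h2 hK0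
      _ ≤ K * (2 * (k : ℝ) * τ₂ ^ 2 * (((C : ℝ) + 1) * (A + B))) := by
          refine mul_le_mul_of_nonneg_left (mul_le_mul_of_nonneg_left hstep ?_) hK0
          positivity
      _ = c₀ * (A + B) := by rw [hc₀]; ring
      _ ≤ (c₀ + 1) * (A + B) :=
          mul_le_mul_of_nonneg_right (by linarith) (by linarith)
  have hhell0 : ∀ (i : Fin m) (j : Fin n),
      0 ≤ hellingerSq (labelProb γt γw i j) (labelProb γt' γw' i j) :=
    fun i j => Finset.sum_nonneg fun _ _ => sq_nonneg _
  have hnn : 0 ≤ (1 / (m * n : ℝ)) *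
      ∑ i, ∑ j, hellingerSq (labelProb γt γw i j) (labelProb γt' γw' i j) := by
    refine mul_nonneg (by positivity) ?_
    exact Finset.sum_nonneg fun i _ => Finset.sum_nonneg fun j _ => hhell0 i j
  calc (HSparam γt γw γt' γw') ^ 2
      = (1 / (m * n : ℝ)) *
          ∑ i, ∑ j, hellingerSq (labelProb γt γw i j) (labelProb γt' γw' i j) := by
        rw [HSparam, Real.sq_sqrt hnn]
    _ ≤ (1 / (m * n : ℝ)) * ∑ i, ∑ j, (c₀ + 1) * ((∑ l, (γt i l - γt' i l) ^ 2) +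
          ∑ c', ∑ l, (γw j c' l - γw' j c' l) ^ 2) := by
        refine mul_le_mul_of_nonneg_left ?_ (by positivity)
        exact Finset.sum_le_sum fun i _ => Finset.sum_le_sum fun j _ => hbound i j
    _ = (c₀ + 1) * ((1 / (m : ℝ)) * (∑ i, ∑ l, (γt i l - γt' i l) ^ 2) +
          (1 / (n : ℝ)) * (∑ j, ∑ c', ∑ l, (γw j c' l - γw' j c' l) ^ 2)) :=
        avg_split hm hn (c₀ + 1) (fun i => ∑ l, (γt i l - γt' i l) ^ 2)
          (fun j => ∑ c', ∑ l, (γw j c' l - γw' j c' l) ^ 2)
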